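/- Let L be a finite distributive lattice. For every maximal chain ⊥ = m_0 ⋖ m_1 ⋖ ⋯ ⋖ m_r = ⊤ in L there exists a sequence of join-irreducible elements j_1, j_2, …, j_r of L such that for every i ∈ {1, …, r}: m_{i−1} ⊔ j_i = m_i and m_{i−1} ⊓ j_i = j_i⁻, where j_i⁻ denotes the unique element of L covered by j_i. -/

import Mathlib

/-- In a finite distributive lattice, for every maximal chain
`⊥ = m 0 ⋖ m 1 ⋖ ⋯ ⋖ m r = ⊤` there is a sequence of join-irreducible elements
`j 1, …, j r` such that `m (i-1) ⊔ j i = m i` and `m (i-1) ⊓ j i` is the (unique)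
element covered by `j i`. -/
theorem maximal_chain_join_irreducibles
    {L : Type*} [DistribLattice L] [Fintype L] [BoundedOrder L]
    (r : ℕ) (m : Fin (r + 1) → L)
    (h0 : m 0 = ⊥) (htop : m (Fin.last r) = ⊤)
    (hcov : ∀ i : Fin r, m i.castSucc ⋖ m i.succ) :
    ∃ j : Fin r → L, ∀ i : Fin r,
      SupIrred (j i) ∧ m i.castSucc ⊔ j i = m i.succ ∧ (m i.castSucc ⊓ j i) ⋖ j i := by
  have key : ∀ i : Fin r, ∃ j : L,
      SupIrred j ∧ m i.castSucc ⊔ j = m i.succ ∧ (m i.castSucc ⊓ j) ⋖ j := by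
    intro i
    set a := m i.castSucc with ha
    set b := m i.succ with hb
    have hab : a ⋖ b := hcov i
    classical
    have hS : (Finset.univ.filter (fun x : L => x ≤ b ∧ ¬ x ≤ a)).Nonempty :=
      ⟨b, by simp [hab.lt.not_ge]⟩
    obtain ⟨j, hjmem, hjmin⟩ : ∃ j ∈ Finset.univ.filter (fun x : L => x ≤ b ∧ ¬ x ≤ a),
        ∀ x ∈ Finset.univ.filter (fun x : L => x ≤ b ∧ ¬ x ≤ a), ¬ x < j := by
      obtain ⟨j, hj⟩ := Finset.exists_minimal hS
      exact ⟨j, hj.prop, fun x hx hlt => hlt.not_ge (hj.2 hx hlt.le)⟩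
    simp only [Finset.mem_filter, Finset.mem_univ, true_and] at hjmem hjmin
    obtain ⟨hjb, hja⟩ := hjmem
    have hmin : ∀ x : L, x ≤ b → ¬ x ≤ a → ¬ x < j := fun x h1 h2 =>
      hjmin x (by simp [h1, h2])
    refine ⟨j, ⟨?_, ?_⟩, ?_, ?_⟩
    · intro hjm
      exact hja ((hjm bot_le).trans bot_le)
    · intro u v huv
      by_contra hne
      push_neg at hne
      obtain ⟨hu, hv⟩ := hne
      have hu' : u < j := lt_of_le_of_ne (huv ▸ le_sup_left) hu
      have hv' : v < j := lt_of_le_of_ne (huv ▸ le_sup_right) hv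
      have hua : u ≤ a := by
        by_contra h; exact hmin u (hu'.le.trans hjb) h hu'
      have hva : v ≤ a := by
        by_contra h; exact hmin v (hv'.le.trans hjb) h hv'
      exact hja (huv ▸ sup_le hua hva)
    · have h1 : a < a ⊔ j :=
        lt_of_le_of_ne le_sup_left (fun h => hja (le_sup_right.trans h.ge))
      have h2 : a ⊔ j ≤ b := sup_le hab.le hjb
      rcases h2.lt_or_eq with h | h
      · exact absurd h (hab.2 h1)
      · exact h
    · constructor
      · exact inf_lt_right.2 hja
      · intro x hx hxj
        have hxa : ¬ x ≤ a := fun h => hx.not_ge (le_inf h hxj.le)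
        exact hmin x (hxj.le.trans hjb) hxa hxj
  choose j hj using key
  exact ⟨j, hj⟩
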